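/- Let $A$ be a commutative ring, $J$ an ideal, and $w, \tilde w : F/JF \twoheadrightarrow J/J^2$ two surjections, where $F$ is projective of rank $n$ with $F/JF$ free of rank $n$ over $A/J$ and $J/J^2$ generated by $n$ elements, with $A/J$ Artinian local (or a finite product of Artinian local rings). Then there exists a unit $\bar b \in (A/J)^\times$ and an automorphism $\theta$ of $F/JF$ of determinant $\bar b$ such that $\tilde w = w \circ \theta$. -/

import Mathlib

open Submodule Set

/-- Over a field, two surjections from a finite-dimensional space differ by an automorphism. -/
lemma aux_field_surj_equiv {k M V : Type*} [Field k] [AddCommGroup M] [Module k M]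
    [AddCommGroup V] [Module k V] [FiniteDimensional k M]
    (f g : M →ₗ[k] V) (hf : Function.Surjective f) (hg : Function.Surjective g) :
    ∃ e : M ≃ₗ[k] M, g = f ∘ₗ (e : M →ₗ[k] M) := by
  have : Module.Finite k V := Module.Finite.of_surjective f hf
  obtain ⟨s, hs⟩ := Module.projective_lifting_property f LinearMap.id hf
  obtain ⟨s', hs'⟩ := Module.projective_lifting_property g LinearMap.id hg
  have hfs : ∀ x, f (s x) = x := fun x => congrFun (congrArg DFunLike.coe hs) x
  have hgs' : ∀ x, g (s' x) = x := fun x => congrFun (congrArg DFunLike.coe hs') x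
  have hr : Module.finrank k (LinearMap.ker f) = Module.finrank k (LinearMap.ker g) := by
    have e1 := LinearMap.finrank_range_add_finrank_ker f
    have e2 := LinearMap.finrank_range_add_finrank_ker g
    rw [LinearMap.range_eq_top.2 hf] at e1
    rw [LinearMap.range_eq_top.2 hg] at e2
    omega
  let E : (LinearMap.ker g) ≃ₗ[k] (LinearMap.ker f) :=
    LinearEquiv.ofFinrankEq _ _ hr.symm
  have hPg : ∀ x : M, x - s' (g x) ∈ LinearMap.ker g := by
    intro x; simp [LinearMap.mem_ker, hgs']
  have hPf : ∀ x : M, x - s (f x) ∈ LinearMap.ker f := by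
    intro x; simp [LinearMap.mem_ker, hfs]
  let Pg : M →ₗ[k] LinearMap.ker g :=
    LinearMap.codRestrict _ (LinearMap.id - s' ∘ₗ g) hPg
  let Pf : M →ₗ[k] LinearMap.ker f :=
    LinearMap.codRestrict _ (LinearMap.id - s ∘ₗ f) hPf
  let T : M →ₗ[k] M := s ∘ₗ g + (LinearMap.ker f).subtype ∘ₗ E.toLinearMap ∘ₗ Pg
  let T' : M →ₗ[k] M := s' ∘ₗ f + (LinearMap.ker g).subtype ∘ₗ E.symm.toLinearMap ∘ₗ Pf
  have hT : ∀ x, T x = s (g x) + (E ⟨x - s' (g x), hPg x⟩ : M) := fun x => rfl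
  have hT' : ∀ y, T' y = s' (f y) + (E.symm ⟨y - s (f y), hPf y⟩ : M) := fun y => rfl
  have hfT : ∀ x, f (T x) = g x := by
    intro x
    rw [hT, map_add, hfs, (E ⟨x - s' (g x), hPg x⟩).2, add_zero]
  have hgT' : ∀ y, g (T' y) = f y := by
    intro y
    rw [hT', map_add, hgs', (E.symm ⟨y - s (f y), hPf y⟩).2, add_zero]
  have h1 : T' ∘ₗ T = LinearMap.id := by
    ext x
    simp only [LinearMap.comp_apply, LinearMap.id_apply]
    rw [hT' (T x)]
    have key : (⟨T x - s (f (T x)), hPf (T x)⟩ : LinearMap.ker f)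
        = E ⟨x - s' (g x), hPg x⟩ := by
      apply Subtype.ext
      show T x - s (f (T x)) = _
      rw [hfT x, hT x]; abel
    rw [key, LinearEquiv.symm_apply_apply, hfT x]
    simp
  have h2 : T ∘ₗ T' = LinearMap.id := by
    ext y
    simp only [LinearMap.comp_apply, LinearMap.id_apply]
    rw [hT (T' y)]
    have key : (⟨T' y - s' (g (T' y)), hPg (T' y)⟩ : LinearMap.ker g)
        = E.symm ⟨y - s (f y), hPf y⟩ := by
      apply Subtype.ext
      show T' y - s' (g (T' y)) = _
      rw [hgT' y, hT' y]; abel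
    rw [key, LinearEquiv.apply_symm_apply, hgT' y]
    simp
  refine ⟨LinearEquiv.ofLinear T T' h2 h1, ?_⟩
  ext x
  exact (hfT x).symm

/-- Over a field, two spanning `n`-tuples are related by an invertible matrix. -/
lemma aux_field_matrix {k V : Type*} [Field k] [AddCommGroup V] [Module k V] {n : ℕ}
    (v v' : Fin n → V) (hv : span k (range v) = ⊤) (hv' : span k (range v') = ⊤) :
    ∃ B : Matrix (Fin n) (Fin n) k, IsUnit B.det ∧ ∀ i, v' i = ∑ j, B i j • v j := by
  let f := Fintype.linearCombination k v
  let g := Fintype.linearCombination k v'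
  have hfs : Function.Surjective f := by
    rw [← LinearMap.range_eq_top, Fintype.range_linearCombination, hv]
  have hgs : Function.Surjective g := by
    rw [← LinearMap.range_eq_top, Fintype.range_linearCombination, hv']
  obtain ⟨e, he⟩ := aux_field_surj_equiv f g hfs hgs
  refine ⟨(LinearMap.toMatrix' (e : (Fin n → k) →ₗ[k] (Fin n → k))).transpose, ?_, ?_⟩
  · rw [Matrix.det_transpose, LinearMap.det_toMatrix']
    exact e.isUnit_det'
  · intro i
    have h1 : g (Pi.single i 1) = v' i := by
      simp [g, Fintype.linearCombination_apply, Pi.single_apply]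
    have h2 : f (e (Pi.single i 1)) = v' i := by
      rw [← h1, he]; rfl
    rw [← h2]
    simp only [f, Fintype.linearCombination_apply]
    refine Finset.sum_congr rfl fun j _ => ?_
    rw [Matrix.transpose_apply, LinearMap.toMatrix'_apply]
    have hsingle : (fun j' => if j' = i then (1:k) else 0) = Pi.single i 1 := by
      ext j'; simp [Pi.single_apply]
    rfl

/-- Local ingredient: a relating matrix whose determinant avoids a given maximal ideal. -/
lemma aux_local_matrix {R N : Type*} [CommRing R] [AddCommGroup N] [Module R N] {n : ℕ}
    (v v' : Fin n → N) (hv : span R (range v) = ⊤) (hv' : span R (range v') = ⊤)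
    (p : Ideal R) (hp : p.IsMaximal) :
    ∃ C : Matrix (Fin n) (Fin n) R, C.det ∉ p ∧ ∀ i, v' i = ∑ j, C i j • v j := by
  haveI := hp
  let k := R ⧸ p
  letI : Field k := Ideal.Quotient.field p
  let Nb := N ⧸ (p • ⊤ : Submodule R N)
  let mkN : N →ₗ[R] Nb := (p • ⊤ : Submodule R N).mkQ
  let vb : Fin n → Nb := fun i => mkN (v i)
  let vb' : Fin n → Nb := fun i => mkN (v' i)
  have hmk : ∀ (r : R) (m : N), Ideal.Quotient.mk p r • (mkN m) = mkN (r • m) :=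
    fun r m => Module.Quotient.mk_smul_mk N p r m
  -- images span over k
  have hspan : ∀ u : Fin n → N, span R (range u) = ⊤ →
      span k (range (fun i => mkN (u i))) = ⊤ := by
    intro u hu
    rw [eq_top_iff]
    rintro x -
    obtain ⟨y, rfl⟩ := (p • ⊤ : Submodule R N).mkQ_surjective x
    have hy : y ∈ span R (range u) := hu ▸ mem_top
    refine span_induction (p := fun y _ => mkN y ∈ span k (range fun i => mkN (u i)))
      ?_ ?_ ?_ ?_ hy
    · rintro _ ⟨i, rfl⟩; exact subset_span ⟨i, rfl⟩
    · simp
    · intro a b _ _ ha hb; rw [map_add]; exact add_mem ha hb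
    · intro r a _ ha
      rw [← hmk r a]
      exact Submodule.smul_mem (span k (range fun i => mkN (u i))) (Ideal.Quotient.mk p r) ha
  obtain ⟨B, hBdet, hB⟩ := aux_field_matrix (k := k) vb vb' (hspan v hv) (hspan v' hv')
  -- a matrix over R relating v' to v
  have hC1 : ∀ i, ∃ c : Fin n → R, ∑ j, c j • v j = v' i := by
    intro i
    have : v' i ∈ span R (range v) := hv ▸ mem_top
    exact (mem_span_range_iff_exists_fun R).mp this
  choose c hc using hC1
  let C₁ : Matrix (Fin n) (Fin n) R := Matrix.of c
  -- lift rows of B - C̄₁ to relations among the v j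
  have hrow : ∀ i, ∃ x : Fin n → R,
      (∀ j, Ideal.Quotient.mk p (x j) = B i j - Ideal.Quotient.mk p (C₁ i j)) ∧
      ∑ j, x j • v j = 0 := by
    intro i
    choose y hy using fun j => Ideal.Quotient.mk_surjective
      (B i j - Ideal.Quotient.mk p (C₁ i j))
    set u : N := ∑ j, y j • v j with hu
    have hmku : mkN u = 0 := by
      rw [hu, map_sum]
      have : ∀ j, mkN (y j • v j) = B i j • vb j - Ideal.Quotient.mk p (C₁ i j) • vb j := by
        intro j
        rw [← hmk (y j) (v j), hy j, sub_smul]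
      rw [Finset.sum_congr rfl fun j _ => this j, Finset.sum_sub_distrib]
      have h1 : ∑ j, B i j • vb j = vb' i := (hB i).symm
      have h2 : ∑ j, Ideal.Quotient.mk p (C₁ i j) • vb j = vb' i := by
        have : ∀ j, Ideal.Quotient.mk p (C₁ i j) • vb j = mkN (C₁ i j • v j) :=
          fun j => hmk _ _
        rw [Finset.sum_congr rfl fun j _ => this j, ← map_sum]
        show mkN (∑ j, c i j • v j) = vb' i
        rw [hc i]
      rw [h1, h2, sub_self]
    -- u lies in p • ⊤, write it as the image of something in p • ⊤ of R^n
    have humem : u ∈ (p • ⊤ : Submodule R N) := by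
      rwa [← Submodule.Quotient.mk_eq_zero]
    let φ : (Fin n → R) →ₗ[R] N := Fintype.linearCombination R v
    have hφsurj : LinearMap.range φ = ⊤ := by
      rw [Fintype.range_linearCombination, hv]
    have hmap : Submodule.map φ (p • ⊤ : Submodule R (Fin n → R)) = (p • ⊤ : Submodule R N) := by
      rw [Submodule.map_smul'', Submodule.map_top, hφsurj]
    rw [← hmap] at humem
    obtain ⟨z, hz, hzu⟩ := humem
    have hzp : ∀ j, z j ∈ p := by
      intro j
      have hle : (p • ⊤ : Submodule R (Fin n → R)) ≤
          Submodule.comap (LinearMap.proj j : (Fin n → R) →ₗ[R] R) (p.restrictScalars R) := by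
        refine Submodule.smul_le.mpr ?_
        intro r hr m _
        show (r • m) j ∈ p
        rw [Pi.smul_apply, smul_eq_mul]
        exact Ideal.mul_mem_right _ _ hr
      exact hle hz
    refine ⟨y - z, fun j => ?_, ?_⟩
    · simp only [Pi.sub_apply, map_sub, hy j]
      rw [Ideal.Quotient.eq_zero_iff_mem.mpr (hzp j), sub_zero]
    · have heq : ∑ j, (y - z) j • v j = u - φ z := by
        rw [hu]
        simp only [Pi.sub_apply, φ, Fintype.linearCombination_apply, sub_smul,
          Finset.sum_sub_distrib]
      rw [heq, hzu, sub_self]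
  choose x hx1 hx2 using hrow
  let C : Matrix (Fin n) (Fin n) R := C₁ + Matrix.of x
  have hCmap : (Ideal.Quotient.mk p).mapMatrix C = B := by
    ext i j
    simp only [RingHom.mapMatrix_apply, Matrix.map_apply, C, Matrix.add_apply, Matrix.of_apply,
      map_add, hx1 i j]
    ring
  refine ⟨C, ?_, fun i => ?_⟩
  · intro hdet
    have : Ideal.Quotient.mk p C.det = 0 := Ideal.Quotient.eq_zero_iff_mem.mpr hdet
    rw [RingHom.map_det, hCmap] at this
    exact hBdet.ne_zero this
  · have : ∑ j, C i j • v j = (∑ j, C₁ i j • v j) + ∑ j, x i j • v j := by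
      simp only [C, Matrix.add_apply, Matrix.of_apply, add_smul, Finset.sum_add_distrib]
    rw [this, hx2 i, add_zero]
    exact (hc i).symm

/-- Over an Artinian (semilocal) commutative ring, two spanning `n`-tuples are related by
an invertible matrix. -/
lemma aux_global_matrix {R N : Type*} [CommRing R] [IsArtinianRing R] [AddCommGroup N]
    [Module R N] {n : ℕ}
    (v v' : Fin n → N) (hv : span R (range v) = ⊤) (hv' : span R (range v') = ⊤) :
    ∃ C : Matrix (Fin n) (Fin n) R, IsUnit C.det ∧ ∀ i, v' i = ∑ j, C i j • v j := by
  classical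
  -- the linear map sending a matrix to the corresponding combinations of the `v j`
  let Φ : Matrix (Fin n) (Fin n) R →ₗ[R] (Fin n → N) :=
    { toFun := fun C => fun i => ∑ j, C i j • v j
      map_add' := by
        intro C D; funext i
        simp [Matrix.add_apply, add_smul, Finset.sum_add_distrib]
      map_smul' := by
        intro r C; funext i
        simp only [Matrix.smul_apply, smul_eq_mul, RingHom.id_apply, Pi.smul_apply]
        rw [Finset.smul_sum]
        exact Finset.sum_congr rfl fun j _ => (mul_smul r (C i j) (v j))}
  have hΦ : ∀ C : Matrix (Fin n) (Fin n) R, Φ C = fun i => ∑ j, C i j • v j := fun _ => rfl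
  -- base solution
  have hC0 : ∃ C₀, Φ C₀ = v' := by
    have h : ∀ i, ∃ c : Fin n → R, ∑ j, c j • v j = v' i := by
      intro i
      exact (mem_span_range_iff_exists_fun R).mp (hv ▸ mem_top)
    choose c hc using h
    exact ⟨Matrix.of c, funext fun i => hc i⟩
  obtain ⟨C₀, hC₀⟩ := hC0
  -- local solutions
  have hloc : ∀ p : Ideal R, p.IsMaximal →
      ∃ C, C.det ∉ p ∧ Φ C = v' := by
    intro p hp
    obtain ⟨C, h1, h2⟩ := aux_local_matrix v v' hv hv' p hp
    exact ⟨C, h1, funext fun i => (h2 i).symm⟩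
  choose Cp hCpdet hCprel using hloc
  -- the finite set of maximal ideals
  let T : Finset (Ideal R) := (IsArtinianRing.setOfPred_isMaximal_finite R).toFinset
  have hTmem : ∀ p : Ideal R, p ∈ T ↔ p.IsMaximal := by
    intro p; simp [T, Set.Finite.mem_toFinset]
  -- CRT elements
  have hb : ∀ p ∈ T, ∃ b : R, Ideal.Quotient.mk p b = 1 ∧ ∀ q ∈ T, q ≠ p → b ∈ q := by
    intro p hpT
    have hp : p.IsMaximal := (hTmem p).mp hpT
    have hc : ∀ q ∈ T.erase p, ∃ c : R, c ∈ q ∧ 1 - c ∈ p := by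
      intro q hq
      have hqT := Finset.mem_of_mem_erase hq
      have hqp : q ≠ p := Finset.ne_of_mem_erase hq
      have hq' : q.IsMaximal := (hTmem q).mp hqT
      have hsup : p ⊔ q = ⊤ := Ideal.IsMaximal.coprime_of_ne hp hq' (Ne.symm hqp)
      have h1 : (1 : R) ∈ p ⊔ q := hsup ▸ Submodule.mem_top
      obtain ⟨a, ha, c, hcq, hac⟩ := Submodule.mem_sup.mp h1
      exact ⟨c, hcq, by rw [← hac]; simpa using ha⟩
    choose cc hcc1 hcc2 using hc
    refine ⟨∏ q ∈ (T.erase p).attach, cc q q.2, ?_, ?_⟩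
    · rw [map_prod]
      have : ∀ q ∈ (T.erase p).attach, Ideal.Quotient.mk p (cc q q.2) = 1 := by
        intro q _
        have : Ideal.Quotient.mk p (1 - cc q q.2) = 0 :=
          Ideal.Quotient.eq_zero_iff_mem.mpr (hcc2 q q.2)
        rw [map_sub, map_one, sub_eq_zero] at this
        exact this.symm
      rw [Finset.prod_congr rfl this, Finset.prod_const_one]
    · intro q hqT hqp
      have hqe : q ∈ T.erase p := Finset.mem_erase.mpr ⟨hqp, hqT⟩
      have hmem : (⟨q, hqe⟩ : {x // x ∈ T.erase p}) ∈ (T.erase p).attach :=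
        Finset.mem_attach _ _
      rw [← Finset.prod_erase_mul _ _ hmem]
      exact Ideal.mul_mem_left _ _ (hcc1 q hqe)
  choose b hb1 hb2 using hb
  -- glue
  let S : R := ∑ p ∈ T.attach, b p p.2
  let C : Matrix (Fin n) (Fin n) R :=
    (1 - S) • C₀ + ∑ p ∈ T.attach, b p p.2 • Cp p ((hTmem p).mp p.2)
  have hCrel : Φ C = v' := by
    show Φ _ = v'
    rw [map_add, map_smul, map_sum, hC₀]
    simp only [map_smul]
    have : ∀ p ∈ T.attach, b p p.2 • Φ (Cp p ((hTmem ↑p).mp p.2)) = b p p.2 • v' := by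
      intro p _
      rw [hCprel]
    rw [Finset.sum_congr rfl this, ← Finset.sum_smul, ← add_smul, sub_add_cancel, one_smul]
  -- determinant avoids every maximal ideal
  have hdet : ∀ p : Ideal R, p.IsMaximal → C.det ∉ p := by
    intro p hp hdetp
    have hpT : p ∈ T := (hTmem p).mpr hp
    set π := Ideal.Quotient.mk p with hπ
    -- entrywise congruence of C and Cp
    have hmapS : π S = 1 := by
      show π (∑ q ∈ T.attach, b q q.2) = 1
      rw [map_sum]
      rw [Finset.sum_eq_single_of_mem (⟨p, hpT⟩ : {x // x ∈ T}) (Finset.mem_attach _ _)]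
      · exact hb1 p hpT
      · intro q _ hq
        refine Ideal.Quotient.eq_zero_iff_mem.mpr (hb2 q q.2 p hpT ?_)
        intro h
        exact hq (Subtype.ext h.symm)
    have hentry : π.mapMatrix C = π.mapMatrix (Cp p hp) := by
      ext i j
      simp only [RingHom.mapMatrix_apply, Matrix.map_apply, C, Matrix.add_apply,
        Matrix.smul_apply, Matrix.sum_apply, smul_eq_mul, map_add, map_sum, map_mul,
        map_sub, map_one, hmapS, sub_self, zero_mul, zero_add]
      rw [Finset.sum_eq_single_of_mem (⟨p, hpT⟩ : {x // x ∈ T}) (Finset.mem_attach _ _)]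
      · rw [hb1 p hpT, one_mul]
      · intro q _ hq
        rw [Ideal.Quotient.eq_zero_iff_mem.mpr (hb2 q q.2 p hpT fun h => hq (Subtype.ext h.symm)),
          zero_mul]
    have h1 : π C.det = π (Cp p hp).det := by
      rw [RingHom.map_det, RingHom.map_det, hentry]
    have h2 : π C.det = 0 := Ideal.Quotient.eq_zero_iff_mem.mpr hdetp
    rw [h1] at h2
    exact hCpdet p hp (Ideal.Quotient.eq_zero_iff_mem.mp h2)
  refine ⟨C, ?_, fun i => (congrFun hCrel i).symm⟩
  by_contra hunit
  obtain ⟨m, hm, hle⟩ := Ideal.exists_le_maximal (Ideal.span {C.det})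
    (fun h => hunit (Ideal.span_singleton_eq_top.mp h))
  exact hdet m hm (hle (Ideal.subset_span rfl))


/-- Over the Artinian ring `A/J`, any two surjections `w, wt : F/JF ↠ J/J²` from the free
rank-`n` module `F/JF` onto the `n`-generated module `J/J²` differ by an automorphism `θ`
of `F/JF`, whose determinant is a unit `b̄`. -/
theorem surjections_differ_by_automorphism (A : Type*) [CommRing A] [IsNoetherianRing A]
    (J : Ideal A) [IsArtinianRing (A ⧸ J)]
    (F : Type*) [AddCommGroup F] [Module A F] [Module.Projective A F] [Module.Finite A F]
    (n : ℕ) (bas : Module.Basis (Fin n) (A ⧸ J) (F ⧸ (J • (⊤ : Submodule A F))))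
    (hgen : ∃ s : Fin n → J.Cotangent, Submodule.span (A ⧸ J) (Set.range s) = ⊤)
    (w wt : (F ⧸ (J • (⊤ : Submodule A F))) →ₗ[A ⧸ J] J.Cotangent)
    (hw : Function.Surjective w) (hwt : Function.Surjective wt) :
    ∃ (b : (A ⧸ J)ˣ) (θ : (F ⧸ (J • (⊤ : Submodule A F))) ≃ₗ[A ⧸ J]
        (F ⧸ (J • (⊤ : Submodule A F)))),
      LinearMap.det θ.toLinearMap = (b : A ⧸ J) ∧ ∀ x, wt x = w (θ x) := by
  classical
  set R := A ⧸ J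
  set M := F ⧸ (J • (⊤ : Submodule A F))
  let v : Fin n → J.Cotangent := fun i => w (bas i)
  let v' : Fin n → J.Cotangent := fun i => wt (bas i)
  have hspan : ∀ (u : M →ₗ[R] J.Cotangent), Function.Surjective u →
      span R (range fun i => u (bas i)) = ⊤ := by
    intro u hu
    have h1 : (range fun i => u (bas i)) = u '' (range bas) := by
      rw [← Set.range_comp]; rfl
    rw [h1, ← Submodule.map_span, bas.span_eq, Submodule.map_top, LinearMap.range_eq_top.mpr hu]
  obtain ⟨C, hCdet, hCrel⟩ := aux_global_matrix v v' (hspan w hw) (hspan wt hwt)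
  let f : M →ₗ[R] M := bas.constr ℕ fun i => ∑ j, C i j • bas j
  have hwf : w ∘ₗ f = wt := by
    refine bas.ext fun i => ?_
    rw [LinearMap.comp_apply, Module.Basis.constr_basis, map_sum]
    simp only [map_smul]
    exact (hCrel i).symm
  have hmat : LinearMap.toMatrix bas bas f = C.transpose := by
    ext i j
    rw [LinearMap.toMatrix_apply, Module.Basis.constr_basis, map_sum, Matrix.transpose_apply]
    simp only [map_smul]
    rw [Finset.sum_apply']
    simp only [Finsupp.smul_apply, Module.Basis.repr_self, smul_eq_mul, Finsupp.single_apply]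
    simp [Finset.sum_ite_eq]
  have hdet' : IsUnit (LinearMap.toMatrix bas bas f).det := by
    rw [hmat, Matrix.det_transpose]; exact hCdet
  refine ⟨hCdet.unit, LinearEquiv.ofIsUnitDet hdet', ?_, ?_⟩
  · have h1 : (LinearEquiv.ofIsUnitDet hdet').toLinearMap = f := LinearEquiv.coe_ofIsUnitDet hdet'
    rw [h1, ← LinearMap.det_toMatrix bas, hmat, Matrix.det_transpose, IsUnit.unit_spec]
  · intro x
    have h1 : (LinearEquiv.ofIsUnitDet hdet') x = f x := LinearEquiv.ofIsUnitDet_apply hdet' x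
    rw [h1, ← LinearMap.comp_apply, hwf]
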